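/- Lower bound for the geometric action by twice the barrier: let U : ℝ^d → ℝ be continuously differentiable and let φ : [0,1] → ℝ^d be continuously differentiable. Then I_g[φ] = ∫₀¹ ‖∇U(φ(s))‖·‖φ'(s)‖ ds ≥ 2·max_{s∈[0,1]} U(φ(s)) − U(φ(0)) − U(φ(1)). -/

import Mathlib

open Set Filter MeasureTheory

/-- Lower bound for the geometric action by twice the barrier:
`∫₀¹ ‖∇U(φ)‖‖φ'‖ ds ≥ 2·max_{s∈[0,1]} U(φ(s)) − U(φ(0)) − U(φ(1))`. -/
theorem scalar_work_ge_twice_barrier {d : ℕ}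
    (U : EuclideanSpace ℝ (Fin d) → ℝ)
    (gradU : EuclideanSpace ℝ (Fin d) → EuclideanSpace ℝ (Fin d))
    (hgrad : ∀ x, HasGradientAt U (gradU x) x)
    (hgradc : Continuous gradU)
    (φ φ' : ℝ → EuclideanSpace ℝ (Fin d))
    (hφ : ∀ s ∈ Icc (0:ℝ) 1, HasDerivAt φ (φ' s) s)
    (hφ'c : ContinuousOn φ' (Icc 0 1)) :
    (∫ s in (0:ℝ)..1, ‖gradU (φ s)‖ * ‖φ' s‖) ≥
      2 * (⨆ s : Icc (0:ℝ) 1, U (φ s)) - U (φ 0) - U (φ 1) := by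
  set f : ℝ → ℝ := fun s => U (φ s) with hf_def
  set f' : ℝ → ℝ := fun s => @inner ℝ _ _ (gradU (φ s)) (φ' s) with hf'_def
  set g : ℝ → ℝ := fun s => ‖gradU (φ s)‖ * ‖φ' s‖ with hg_def
  have hφc : ContinuousOn φ (Icc 0 1) := fun s hs =>
    (hφ s hs).continuousAt.continuousWithinAt
  have hf : ∀ s ∈ Icc (0:ℝ) 1, HasDerivAt f (f' s) s := by
    intro s hs
    have h1 := (hgrad (φ s)).hasFDerivAt.comp_hasDerivAt s (hφ s hs)
    simp [hf_def, hf'_def] at h1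
    exact h1
  have hfc : ContinuousOn f (Icc 0 1) := fun s hs =>
    ((hgrad (φ s)).hasFDerivAt.continuousAt.comp (hφ s hs).continuousAt).continuousWithinAt
  have hgφc : ContinuousOn (fun s => gradU (φ s)) (Icc 0 1) :=
    hgradc.comp_continuousOn hφc
  have hf'c : ContinuousOn f' (Icc 0 1) := hgφc.inner hφ'c
  have hgc : ContinuousOn g (Icc 0 1) := hgφc.norm.mul hφ'c.norm
  have hbound : ∀ s, |f' s| ≤ g s := fun s => abs_real_inner_le_norm _ _
  obtain ⟨t, ht, hmax⟩ := isCompact_Icc.exists_isMaxOn (nonempty_Icc.2 zero_le_one) hfc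
  have ht0 : (0:ℝ) ≤ t := ht.1
  have ht1 : t ≤ 1 := ht.2
  have hsub1 : uIcc (0:ℝ) t ⊆ Icc 0 1 := by
    rw [uIcc_of_le ht0]; exact Icc_subset_Icc le_rfl ht1
  have hsub2 : uIcc t (1:ℝ) ⊆ Icc 0 1 := by
    rw [uIcc_of_le ht1]; exact Icc_subset_Icc ht0 le_rfl
  have hsup : (⨆ s : Icc (0:ℝ) 1, U (φ s)) ≤ f t := ciSup_le fun s => hmax s.2
  have hintf1 : IntervalIntegrable f' volume 0 t := (hf'c.mono hsub1).intervalIntegrable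
  have hintf2 : IntervalIntegrable f' volume t 1 := (hf'c.mono hsub2).intervalIntegrable
  have hintg1 : IntervalIntegrable g volume 0 t := (hgc.mono hsub1).intervalIntegrable
  have hintg2 : IntervalIntegrable g volume t 1 := (hgc.mono hsub2).intervalIntegrable
  have hftc1 : (∫ s in (0:ℝ)..t, f' s) = f t - f 0 :=
    intervalIntegral.integral_eq_sub_of_hasDerivAt (fun s hs => hf s (hsub1 hs)) hintf1
  have hftc2 : (∫ s in t..(1:ℝ), f' s) = f 1 - f t :=
    intervalIntegral.integral_eq_sub_of_hasDerivAt (fun s hs => hf s (hsub2 hs)) hintf2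
  have hmono1 : (∫ s in (0:ℝ)..t, f' s) ≤ ∫ s in (0:ℝ)..t, g s :=
    intervalIntegral.integral_mono_on ht0 hintf1 hintg1
      (fun s _ => (le_abs_self _).trans (hbound s))
  have hmono2 : (∫ s in t..(1:ℝ), -f' s) ≤ ∫ s in t..(1:ℝ), g s :=
    intervalIntegral.integral_mono_on ht1 hintf2.neg hintg2
      (fun s _ => (neg_le_abs _).trans (hbound s))
  rw [intervalIntegral.integral_neg, hftc2] at hmono2
  rw [hftc1] at hmono1
  have hsplit : (∫ s in (0:ℝ)..1, g s) = (∫ s in (0:ℝ)..t, g s) + ∫ s in t..(1:ℝ), g s :=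
    (intervalIntegral.integral_add_adjacent_intervals hintg1 hintg2).symm
  have : 2 * (⨆ s : Icc (0:ℝ) 1, U (φ s)) - U (φ 0) - U (φ 1) ≤
      2 * f t - f 0 - f 1 := by
    simp only [hf_def]; linarith
  calc 2 * (⨆ s : Icc (0:ℝ) 1, U (φ s)) - U (φ 0) - U (φ 1)
      ≤ 2 * f t - f 0 - f 1 := this
    _ ≤ ∫ s in (0:ℝ)..1, g s := by rw [hsplit]; linarith
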